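/- Let E_n be the event that some path has weight at most (length)/e − log n, i.e. E_n = ⋃_{ℓ=1}^{n} ⋃_{γ ∈ Γ_ℓ} { X(γ) ≤ e^{−1}·ℓ − log n }. Then P(E_n) → 0 as n → ∞. -/

import Mathlib

open MeasureTheory ProbabilityTheory Filter Finset

namespace Paper

/-- A path of length `ℓ` in the complete graph on `Fin n`: a sequence of `ℓ+1` distinct
vertices. -/
abbrev Path (n ℓ : ℕ) := {v : Fin (ℓ + 1) → Fin n // Function.Injective v}

/-- The `i`-th edge of a path. -/
def Path.edge {n ℓ : ℕ} (γ : Path n ℓ) (i : Fin ℓ) : Sym2 (Fin n) :=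
  s(γ.1 i.castSucc, γ.1 i.succ)

/-- The total weight `X(γ)` of a path. -/
noncomputable def weight {n ℓ : ℕ} (ω : Sym2 (Fin n) → ℝ) (γ : Path n ℓ) : ℝ :=
  ∑ i : Fin ℓ, ω (γ.edge i)

/-- Partial sum of the first `k` edge weights of a path. -/
noncomputable def partialSum {n ℓ : ℕ} (ω : Sym2 (Fin n) → ℝ) (γ : Path n ℓ) (k : ℕ) : ℝ :=
  ∑ i : Fin ℓ, if (i : ℕ) < k then ω (γ.edge i) else 0

/-- The deviation `M(γ) = max_{1 ≤ k ≤ ℓ} |∑_{i=1}^k X_{e_i} - (k/ℓ) X(γ)|`. -/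
noncomputable def deviation {n ℓ : ℕ} (ω : Sym2 (Fin n) → ℝ) (γ : Path n ℓ) : ℝ :=
  ⨆ k : Fin ℓ, |partialSum ω γ ((k : ℕ) + 1) - (((k : ℕ) + 1 : ℝ) / ℓ) * weight ω γ|

/-- The law of the i.i.d. edge weights: each edge carries an exponential variable with
mean `n` (rate `1/n`). -/
noncomputable def P (n : ℕ) : Measure (Sym2 (Fin n) → ℝ) :=
  Measure.pi fun _ => expMeasure ((n : ℝ)⁻¹)

/-- `L n λ ω` : the maximal `ℓ` such that some path of length `ℓ` has weight at most `λℓ`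
(`0` if there is none). -/
noncomputable def L (n : ℕ) (lam : ℝ) (ω : Sym2 (Fin n) → ℝ) : ℕ :=
  sSup {ℓ : ℕ | ∃ γ : Path n ℓ, weight ω γ ≤ lam * ℓ}

/-! ### Auxiliary lemmas -/

open scoped ENNReal

lemma lintegral_fin_pi_prod {α : Type*} [MeasurableSpace α] (μ : Measure α) [SigmaFinite μ] :
    ∀ {m : ℕ} (f : Fin m → α → ℝ≥0∞), (∀ i, Measurable (f i)) →
      ∫⁻ x : Fin m → α, ∏ i, f i (x i) ∂Measure.pi (fun _ => μ) = ∏ i, ∫⁻ x, f i x ∂μ := by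
  intro m
  induction m with
  | zero =>
    intro f hf
    simp [lintegral_const, Measure.pi_univ]
  | succ m ih =>
    intro f hf
    rw [← ((measurePreserving_piFinSuccAbove (fun _ : Fin (m+1) => μ) 0).symm).lintegral_comp_emb
      (MeasurableEquiv.measurableEmbedding _)]
    simp only [MeasurableEquiv.piFinSuccAbove_symm_apply, Fin.insertNthEquiv_apply,
      Fin.insertNth_zero, Fin.zero_succAbove, cast_eq]
    simp_rw [Fin.prod_univ_succ, Fin.cons_zero, Fin.cons_succ]
    rw [lintegral_prod_mul (f := fun x => f 0 x)
      (g := fun y : Fin m → α => ∏ i : Fin m, f i.succ (y i)) (hf 0).aemeasurable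
      (Finset.measurable_prod _ fun i _ => (hf i.succ).comp (measurable_pi_apply i)).aemeasurable]
    rw [ih (fun i => f i.succ) (fun i => hf i.succ)]

lemma lintegral_pi_prod {ι : Type*} [Fintype ι] {α : Type*} [MeasurableSpace α]
    (μ : Measure α) [SigmaFinite μ] (f : ι → α → ℝ≥0∞) (hf : ∀ i, Measurable (f i)) :
    ∫⁻ x : ι → α, ∏ i, f i (x i) ∂Measure.pi (fun _ => μ) = ∏ i, ∫⁻ x, f i x ∂μ := by
  let e := (Fintype.equivFin ι).symm
  rw [← ((measurePreserving_piCongrLeft (fun _ : ι => μ) e).lintegral_comp_emb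
    (MeasurableEquiv.measurableEmbedding _))]
  simp_rw [← e.prod_comp, MeasurableEquiv.coe_piCongrLeft, Equiv.piCongrLeft_apply_apply]
  rw [lintegral_fin_pi_prod μ (fun i => f (e i)) (fun i => hf (e i))]

lemma lintegral_exp_neg_expMeasure {r s : ℝ} (hr : 0 < r) (hs : 0 ≤ s) :
    ∫⁻ x, ENNReal.ofReal (Real.exp (-(s * x))) ∂(expMeasure r) = ENNReal.ofReal (r / (r + s)) := by
  have hrs : 0 < r + s := by linarith
  have hpm : expMeasure r = volume.withDensity (exponentialPDF r) := rfl
  rw [hpm, lintegral_withDensity_eq_lintegral_mul _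
    (show Measurable (exponentialPDF r) from (measurable_exponentialPDFReal r).ennreal_ofReal)
    (by fun_prop : Measurable fun x : ℝ => ENNReal.ofReal (Real.exp (-(s * x))))]
  have key : ∀ x : ℝ, (exponentialPDF r * fun x => ENNReal.ofReal (Real.exp (-(s * x)))) x
      = ENNReal.ofReal (r / (r + s)) * exponentialPDF (r + s) x := by
    intro x
    rcases le_or_gt 0 x with hx | hx
    · rw [Pi.mul_apply, exponentialPDF_of_nonneg hx, exponentialPDF_of_nonneg hx,
        ← ENNReal.ofReal_mul (by positivity), ← ENNReal.ofReal_mul (by positivity)]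
      congr 1
      have h : -(r*x) + -(s*x) = -((r+s)*x) := by ring
      rw [mul_assoc, ← Real.exp_add, h]
      field_simp
    · simp [Pi.mul_apply, exponentialPDF_of_neg hx]
  rw [lintegral_congr key, lintegral_const_mul _ (show Measurable (exponentialPDF (r+s)) from
    (measurable_exponentialPDFReal (r+s)).ennreal_ofReal),
    lintegral_exponentialPDF_eq_one hrs, mul_one]

lemma Path.edge_injective {n ℓ : ℕ} (γ : Path n ℓ) : Function.Injective γ.edge := by
  intro i j h
  rw [Path.edge, Path.edge, Sym2.eq_iff] at h
  rcases h with ⟨h1, h2⟩ | ⟨h1, h2⟩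
  · have := γ.2 h1
    have : (i : ℕ) = (j : ℕ) := by simpa using congrArg Fin.val this
    exact Fin.ext this
  · have ha := congrArg Fin.val (γ.2 h1)
    have hb := congrArg Fin.val (γ.2 h2)
    simp only [Fin.coe_castSucc, Fin.val_succ] at ha hb
    omega

lemma chernoff {n ℓ : ℕ} (hn : 0 < n) (γ : Path n ℓ) (t s : ℝ) (hs : 0 ≤ s) :
    P n {ω | weight ω γ ≤ t}
      ≤ ENNReal.ofReal (Real.exp (s * t)) *
        ENNReal.ofReal ((n : ℝ)⁻¹ / ((n : ℝ)⁻¹ + s)) ^ ℓ := by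
  classical
  set r : ℝ := (n : ℝ)⁻¹ with hrdef
  have hr : 0 < r := by
    have : (0:ℝ) < n := by exact_mod_cast hn
    positivity
  haveI : IsProbabilityMeasure (expMeasure r) := isProbabilityMeasure_expMeasure hr
  set F : (Sym2 (Fin n) → ℝ) → ℝ≥0∞ := fun ω => ENNReal.ofReal (Real.exp (-(s * weight ω γ)))
    with hFdef
  have hwm : Measurable fun ω : Sym2 (Fin n) → ℝ => weight ω γ :=
    Finset.measurable_sum _ fun i _ => measurable_pi_apply _
  have hFm : Measurable F := by
    apply Measurable.ennreal_ofReal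
    exact ((hwm.const_mul s).neg).exp
  set T : Finset (Sym2 (Fin n)) := Finset.image γ.edge Finset.univ with hTdef
  have hTcard : T.card = ℓ := by
    rw [hTdef, Finset.card_image_of_injective _ γ.edge_injective, Finset.card_univ,
      Fintype.card_fin]
  have hFeq : ∀ ω : Sym2 (Fin n) → ℝ, F ω = ∏ j : Sym2 (Fin n),
      (if j ∈ T then (fun x : ℝ => ENNReal.ofReal (Real.exp (-(s * x)))) else
        (fun _ : ℝ => (1 : ℝ≥0∞))) (ω j) := by
    intro ω
    have h1 : -(s * weight ω γ) = ∑ i : Fin ℓ, -(s * ω (γ.edge i)) := by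
      rw [weight, Finset.mul_sum, ← Finset.sum_neg_distrib]
    rw [hFdef]
    simp only
    rw [h1, Real.exp_sum, ENNReal.ofReal_prod_of_nonneg (fun i _ => (Real.exp_pos _).le)]
    have himg : ∏ j ∈ T, ENNReal.ofReal (Real.exp (-(s * ω j)))
        = ∏ i : Fin ℓ, ENNReal.ofReal (Real.exp (-(s * ω (γ.edge i)))) :=
      Finset.prod_image (fun i _ j _ h => γ.edge_injective h)
    rw [← himg, ← Fintype.prod_ite_mem T (fun j => ENNReal.ofReal (Real.exp (-(s * ω j))))]
    exact Finset.prod_congr rfl fun j _ => by split <;> rfl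
  have hlint : ∫⁻ ω, F ω ∂(P n) = ENNReal.ofReal (r / (r + s)) ^ ℓ := by
    calc ∫⁻ ω, F ω ∂(P n)
        = ∫⁻ ω : Sym2 (Fin n) → ℝ, ∏ j : Sym2 (Fin n),
            (if j ∈ T then (fun x : ℝ => ENNReal.ofReal (Real.exp (-(s * x)))) else
              (fun _ : ℝ => (1 : ℝ≥0∞))) (ω j) ∂(P n) := lintegral_congr hFeq
      _ = ∏ j : Sym2 (Fin n), ∫⁻ x : ℝ,
            (if j ∈ T then (fun x : ℝ => ENNReal.ofReal (Real.exp (-(s * x)))) else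
              (fun _ : ℝ => (1 : ℝ≥0∞))) x ∂(expMeasure r) := by
          exact lintegral_pi_prod _ _ fun j => by
            split
            · exact Measurable.ennreal_ofReal ((measurable_id.const_mul s).neg.exp)
            · exact measurable_const
      _ = ∏ j : Sym2 (Fin n), (if j ∈ T then ENNReal.ofReal (r / (r + s)) else 1) := by
          refine Finset.prod_congr rfl fun j _ => ?_
          split
          · exact lintegral_exp_neg_expMeasure hr hs
          · simp
      _ = ENNReal.ofReal (r / (r + s)) ^ ℓ := by
          rw [Fintype.prod_ite_mem T (fun _ => ENNReal.ofReal (r / (r + s))),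
            Finset.prod_const, hTcard]
  set ε : ℝ≥0∞ := ENNReal.ofReal (Real.exp (-(s * t))) with hεdef
  have hε0 : ε ≠ 0 := by
    simp [hεdef, ENNReal.ofReal_eq_zero, not_le, Real.exp_pos]
  have hεtop : ε ≠ ⊤ := ENNReal.ofReal_ne_top
  have hsub : {ω : Sym2 (Fin n) → ℝ | weight ω γ ≤ t} ⊆ {ω | ε ≤ F ω} := by
    intro ω hω
    exact ENNReal.ofReal_le_ofReal (Real.exp_le_exp.mpr
      (neg_le_neg (mul_le_mul_of_nonneg_left hω hs)))
  have markov := mul_meas_ge_le_lintegral₀ (μ := P n) hFm.aemeasurable ε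
  have h2 : P n {ω | weight ω γ ≤ t} ≤ (∫⁻ ω, F ω ∂(P n)) / ε := by
    refine le_trans (measure_mono hsub) ?_
    rw [ENNReal.le_div_iff_mul_le (Or.inl hε0) (Or.inl hεtop), mul_comm]
    exact markov
  refine h2.trans ?_
  rw [hlint, ENNReal.div_eq_inv_mul, hεdef, ← ENNReal.ofReal_inv_of_pos (Real.exp_pos _),
    ← Real.exp_neg, neg_neg]

lemma numeric {n ℓ : ℕ} (hn : 2 ≤ n) (hℓ : 1 ≤ ℓ) :
    ((n : ℝ) ^ (ℓ + 1)) * (Real.exp ((Real.exp 1 - (n : ℝ)⁻¹) * (Real.exp (-1) * ℓ - Real.log n)) *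
      ((n : ℝ)⁻¹ / ((n : ℝ)⁻¹ + (Real.exp 1 - (n : ℝ)⁻¹))) ^ ℓ)
    ≤ (n : ℝ) ^ ((3 : ℝ)/2 - Real.exp 1) := by
  set N : ℝ := (n : ℝ) with hN
  set E : ℝ := Real.exp 1 with hE
  set L : ℝ := (ℓ : ℝ) with hL
  have hN2 : (2:ℝ) ≤ N := by rw [hN]; exact_mod_cast hn
  have hN0 : (0:ℝ) < N := by linarith
  have hL1 : (1:ℝ) ≤ L := by rw [hL]; exact_mod_cast hℓ
  have hE0 : (0:ℝ) < E := Real.exp_pos 1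
  have hlog : 0 ≤ Real.log N := Real.log_nonneg (by linarith)
  have hinv : N⁻¹ ≤ 1/2 := by
    rw [inv_le_comm₀ (by linarith) (by norm_num)]
    simpa using hN2
  have hinv0 : 0 < N⁻¹ := inv_pos.mpr hN0
  have hbase : N⁻¹ + (E - N⁻¹) = E := by ring
  have hexpneg : Real.exp (-1) = E⁻¹ := by rw [hE, Real.exp_neg]
  have h1 : (E - N⁻¹) * (Real.exp (-1) * L - Real.log N)
      ≤ L + Real.log N * ((1:ℝ)/2 - E) := by
    rw [hexpneg]
    have expand : (E - N⁻¹) * (E⁻¹ * L - Real.log N)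
        = L - E * Real.log N - N⁻¹ * E⁻¹ * L + N⁻¹ * Real.log N := by
      field_simp
      ring
    rw [expand]
    have t1 : 0 ≤ N⁻¹ * E⁻¹ * L := by positivity
    have t2 : N⁻¹ * Real.log N ≤ (1/2) * Real.log N :=
      mul_le_mul_of_nonneg_right hinv hlog
    nlinarith
  have h2 : Real.exp ((E - N⁻¹) * (Real.exp (-1) * L - Real.log N))
      ≤ Real.exp L * N ^ ((1:ℝ)/2 - E) := by
    rw [Real.rpow_def_of_pos hN0, ← Real.exp_add]
    exact Real.exp_le_exp.mpr h1
  have h3 : (N⁻¹ / (N⁻¹ + (E - N⁻¹))) ^ ℓ = (N ^ ℓ)⁻¹ * (Real.exp L)⁻¹ := by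
    rw [hbase, div_pow, inv_pow, hE, Real.exp_one_pow, hL]
    rw [div_eq_mul_inv]
  rw [h3]
  calc N ^ (ℓ + 1) * (Real.exp ((E - N⁻¹) * (Real.exp (-1) * L - Real.log N)) *
        ((N ^ ℓ)⁻¹ * (Real.exp L)⁻¹))
      ≤ N ^ (ℓ + 1) * ((Real.exp L * N ^ ((1:ℝ)/2 - E)) * ((N ^ ℓ)⁻¹ * (Real.exp L)⁻¹)) := by
        apply mul_le_mul_of_nonneg_left _ (by positivity)
        apply mul_le_mul_of_nonneg_right h2 (by positivity)
    _ = N * N ^ ((1:ℝ)/2 - E) := by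
        have hexpne : Real.exp L ≠ 0 := (Real.exp_pos L).ne'
        have hNlne : (N:ℝ) ^ ℓ ≠ 0 := by positivity
        field_simp
        ring
    _ = N ^ ((3:ℝ)/2 - E) := by
        nth_rewrite 1 [← Real.rpow_one N]
        rw [← Real.rpow_add hN0]
        congr 1
        ring

lemma perLength {n ℓ : ℕ} (hn : 2 ≤ n) (hℓ : 1 ≤ ℓ) :
    ∑ γ : Path n ℓ, P n {ω | weight ω γ ≤ Real.exp (-1) * ℓ - Real.log n}
      ≤ ENNReal.ofReal ((n : ℝ) ^ ((3:ℝ)/2 - Real.exp 1)) := by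
  classical
  set s : ℝ := Real.exp 1 - (n : ℝ)⁻¹ with hsdef
  have hninv : ((n:ℝ))⁻¹ ≤ 1/2 := by
    rw [inv_le_comm₀ (by exact_mod_cast (by omega : 0 < n)) (by norm_num)]
    norm_num
    exact_mod_cast hn
  have hs : 0 ≤ s := by
    have h2exp : (2:ℝ) ≤ Real.exp 1 := by
      have := Real.add_one_le_exp (1:ℝ)
      linarith
    rw [hsdef]
    linarith
  set t : ℝ := Real.exp (-1) * ℓ - Real.log n with htdef
  set B : ℝ≥0∞ := ENNReal.ofReal (Real.exp (s * t)) *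
    ENNReal.ofReal ((n : ℝ)⁻¹ / ((n : ℝ)⁻¹ + s)) ^ ℓ with hBdef
  have hcard : (Fintype.card (Path n ℓ) : ℝ≥0∞) ≤ ((n : ℝ≥0∞)) ^ (ℓ + 1) := by
    have h1 : Fintype.card (Path n ℓ) ≤ n ^ (ℓ + 1) := by
      refine (Fintype.card_subtype_le _).trans_eq ?_
      rw [Fintype.card_fun, Fintype.card_fin, Fintype.card_fin]
    calc (Fintype.card (Path n ℓ) : ℝ≥0∞) ≤ ((n ^ (ℓ+1) : ℕ) : ℝ≥0∞) := by
          exact_mod_cast h1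
      _ = ((n : ℝ≥0∞)) ^ (ℓ + 1) := by push_cast; ring
  have hsum : ∑ γ : Path n ℓ, P n {ω | weight ω γ ≤ t} ≤ (Fintype.card (Path n ℓ) : ℝ≥0∞) * B := by
    rw [← nsmul_eq_mul, ← Finset.card_univ]
    exact Finset.sum_le_card_nsmul _ _ _ fun γ _ => chernoff (by omega) γ t s hs
  refine hsum.trans ?_
  have hq : (0:ℝ) ≤ (n : ℝ)⁻¹ / ((n : ℝ)⁻¹ + s) := by
    have : (0:ℝ) ≤ (n:ℝ)⁻¹ := by positivity
    positivity
  have hmain : ((n : ℝ≥0∞)) ^ (ℓ + 1) * B = ENNReal.ofReal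
      ((n : ℝ) ^ (ℓ + 1) * (Real.exp (s * t) * ((n : ℝ)⁻¹ / ((n : ℝ)⁻¹ + s)) ^ ℓ)) := by
    rw [hBdef, ← ENNReal.ofReal_natCast n, ← ENNReal.ofReal_pow (by positivity),
      ← ENNReal.ofReal_pow hq, ← ENNReal.ofReal_mul (by positivity),
      ← ENNReal.ofReal_mul (by positivity)]
  calc (Fintype.card (Path n ℓ) : ℝ≥0∞) * B ≤ ((n : ℝ≥0∞)) ^ (ℓ + 1) * B :=
        mul_le_mul_left hcard _
    _ = ENNReal.ofReal ((n : ℝ) ^ (ℓ + 1) *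
        (Real.exp (s * t) * ((n : ℝ)⁻¹ / ((n : ℝ)⁻¹ + s)) ^ ℓ)) := hmain
    _ ≤ ENNReal.ofReal ((n : ℝ) ^ ((3:ℝ)/2 - Real.exp 1)) := by
        apply ENNReal.ofReal_le_ofReal
        have := numeric hn hℓ
        rw [htdef, hsdef]
        rw [hsdef] at *
        exact mod_cast this

/-- Lemma 2.1: the probability that some path (of length 1 ≤ ℓ ≤ n) has weight at most
ℓ/e - log n tends to zero. -/
theorem no_very_light_path :
    Tendsto (fun n : ℕ =>
        P n {ω | ∃ ℓ : ℕ, 1 ≤ ℓ ∧ ℓ ≤ n ∧ ∃ γ : Path n ℓ,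
          weight ω γ ≤ Real.exp (-1) * ℓ - Real.log n})
      atTop (nhds 0) := by
  classical
  have key : ∀ n : ℕ, 2 ≤ n →
      P n {ω | ∃ ℓ : ℕ, 1 ≤ ℓ ∧ ℓ ≤ n ∧ ∃ γ : Path n ℓ,
          weight ω γ ≤ Real.exp (-1) * ℓ - Real.log n}
        ≤ ENNReal.ofReal ((n:ℝ) ^ ((5:ℝ)/2 - Real.exp 1)) := by
    intro n hn
    have hN0 : (0:ℝ) < (n:ℝ) := by exact_mod_cast (by omega : 0 < n)
    have hset : {ω : Sym2 (Fin n) → ℝ | ∃ ℓ : ℕ, 1 ≤ ℓ ∧ ℓ ≤ n ∧ ∃ γ : Path n ℓ,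
        weight ω γ ≤ Real.exp (-1) * ℓ - Real.log n}
        = ⋃ ℓ ∈ Finset.Icc 1 n, ⋃ γ : Path n ℓ,
            {ω | weight ω γ ≤ Real.exp (-1) * ℓ - Real.log n} := by
      ext ω
      simp only [Set.mem_setOf_eq, Set.mem_iUnion, Finset.mem_Icc]
      constructor
      · rintro ⟨ℓ, h1, h2, γ, h3⟩; exact ⟨ℓ, ⟨h1, h2⟩, γ, h3⟩
      · rintro ⟨ℓ, ⟨h1, h2⟩, γ, h3⟩; exact ⟨ℓ, h1, h2, γ, h3⟩
    rw [hset]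
    calc P n (⋃ ℓ ∈ Finset.Icc 1 n, ⋃ γ : Path n ℓ,
          {ω | weight ω γ ≤ Real.exp (-1) * ℓ - Real.log n})
        ≤ ∑ ℓ ∈ Finset.Icc 1 n, P n (⋃ γ : Path n ℓ,
            {ω | weight ω γ ≤ Real.exp (-1) * ℓ - Real.log n}) :=
          measure_biUnion_finset_le _ _
      _ ≤ ∑ ℓ ∈ Finset.Icc 1 n, ∑ γ : Path n ℓ,
            P n {ω | weight ω γ ≤ Real.exp (-1) * ℓ - Real.log n} :=
          Finset.sum_le_sum fun ℓ _ => measure_iUnion_fintype_le _ _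
      _ ≤ ∑ ℓ ∈ Finset.Icc 1 n, ENNReal.ofReal ((n : ℝ) ^ ((3:ℝ)/2 - Real.exp 1)) :=
          Finset.sum_le_sum fun ℓ hℓ => perLength hn (Finset.mem_Icc.mp hℓ).1
      _ = (n : ℝ≥0∞) * ENNReal.ofReal ((n : ℝ) ^ ((3:ℝ)/2 - Real.exp 1)) := by
          rw [Finset.sum_const, Nat.card_Icc, nsmul_eq_mul]
          norm_num
      _ ≤ ENNReal.ofReal ((n:ℝ) ^ ((5:ℝ)/2 - Real.exp 1)) := by
          rw [← ENNReal.ofReal_natCast n, ← ENNReal.ofReal_mul (by positivity)]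
          apply ENNReal.ofReal_le_ofReal
          nth_rewrite 1 [← Real.rpow_one (n:ℝ)]
          rw [← Real.rpow_add hN0]
          apply le_of_eq
          congr 1
          ring
  have hlim : Tendsto (fun n : ℕ => ENNReal.ofReal ((n:ℝ) ^ ((5:ℝ)/2 - Real.exp 1)))
      atTop (nhds 0) := by
    have hneg : (0:ℝ) < Real.exp 1 - (5:ℝ)/2 := by
      have := Real.exp_one_gt_d9
      nlinarith
    have h0 : Tendsto (fun x : ℝ => x ^ (-(Real.exp 1 - (5:ℝ)/2))) atTop (nhds 0) :=
      tendsto_rpow_neg_atTop hneg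
    have h1 : Tendsto (fun n : ℕ => ((n:ℝ)) ^ ((5:ℝ)/2 - Real.exp 1)) atTop (nhds 0) := by
      have := h0.comp (tendsto_natCast_atTop_atTop (R := ℝ))
      simpa [Function.comp_def, neg_sub] using this
    have := (ENNReal.continuous_ofReal.tendsto 0).comp h1
    simpa [Function.comp_def] using this
  refine tendsto_of_tendsto_of_tendsto_of_le_of_le' tendsto_const_nhds hlim
    (Eventually.of_forall fun n => zero_le) ?_
  filter_upwards [eventually_ge_atTop 2] with n hn using key n hn

end Paper
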